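/- arXiv:1001.1242 — 6 statements merged into one kernel-verified Lean document; each statement's English description precedes it below -/
import Mathlib

section
/- Let A be the ℂ-algebra generated by g_{ij}, 1 ≤ i,j ≤ n, with relations g_{ij} g_{kl} = Q²_{ij;kl} g_{kl} g_{ij}, where Q_{ij;kl} = q_{ki} q_{jl} and q_{ij} = exp((i/2)θ^{ij}) for a skew-symmetric complex matrix θ. Then the quantum determinant det_θ = ∑_{σ∈S_n} sgn(σ) (∏_{j=1}^{n-1} ∏_{i=1}^{n-j} Q_{i+j,σ(i+j);j,σ(j)}) g_{1σ(1)} ⋯ g_{nσ(n)} satisfies det_θ · g_{kl} = (∏_{i=1}^n Q²_{ii;kl}) g_{kl} · det_θ for all k,l; in particular det_θ · A = A · det_θ, i.e. det_θ is a normal element. -/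
noncomputable section

/-- `q_{ij} = exp((i/2) θ^{ij})`. -/
def qc {n : ℕ} (θ : Matrix (Fin n) (Fin n) ℂ) (i j : Fin n) : ℂ :=
  Complex.exp (Complex.I / 2 * θ i j)

/-- `Q_{ij;kl} = q_{ki} q_{jl}`. -/
def Qc {n : ℕ} (θ : Matrix (Fin n) (Fin n) ℂ) (i j k l : Fin n) : ℂ :=
  qc θ k i * qc θ j l

/-- The defining relations `g_{ij} g_{kl} = Q²_{ij;kl} g_{kl} g_{ij}` of the twisted coordinate
algebra of `GL_θ(n)`. -/
inductive GLRel {n : ℕ} (θ : Matrix (Fin n) (Fin n) ℂ) :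
    FreeAlgebra ℂ (Fin n × Fin n) → FreeAlgebra ℂ (Fin n × Fin n) → Prop
  | rel (i j k l : Fin n) :
      GLRel θ (FreeAlgebra.ι ℂ (i, j) * FreeAlgebra.ι ℂ (k, l))
        ((Qc θ i j k l) ^ 2 • (FreeAlgebra.ι ℂ (k, l) * FreeAlgebra.ι ℂ (i, j)))

/-- The ℂ-algebra generated by the `g_{ij}` with the above relations. -/
abbrev GLθ {n : ℕ} (θ : Matrix (Fin n) (Fin n) ℂ) := RingQuot (GLRel θ)

/-- The generator `g_{ij}` in the twisted coordinate algebra. -/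
def gg {n : ℕ} (θ : Matrix (Fin n) (Fin n) ℂ) (i j : Fin n) : GLθ θ :=
  RingQuot.mkAlgHom ℂ (GLRel θ) (FreeAlgebra.ι ℂ (i, j))

/-- The quantum determinant
`det_θ = ∑_{σ∈S_n} sgn(σ) (∏_{a<b} Q_{b σ(b); a σ(a)}) g_{1σ(1)} ⋯ g_{nσ(n)}`,
where the coefficient is the twisted Leibniz weight
`∏_{j=1}^{n-1} ∏_{i=1}^{n-j} Q_{i+j,σ(i+j); j,σ(j)}` rewritten as a product over pairs `a < b`. -/
def detθ {n : ℕ} (θ : Matrix (Fin n) (Fin n) ℂ) : GLθ θ :=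
  ∑ σ : Equiv.Perm (Fin n),
    (((Equiv.Perm.sign σ : ℤ) : ℂ) *
      ∏ p ∈ Finset.univ.filter (fun p : Fin n × Fin n => p.1 < p.2),
        Qc θ p.2 (σ p.2) p.1 (σ p.1)) •
      (List.ofFn fun i : Fin n => gg θ i (σ i)).prod


lemma gg_comm {n : ℕ} (θ : Matrix (Fin n) (Fin n) ℂ) (i j k l : Fin n) :
    gg θ i j * gg θ k l = (Qc θ i j k l) ^ 2 • (gg θ k l * gg θ i j) := by
  have h := RingQuot.mkAlgHom_rel ℂ (GLRel.rel (θ := θ) i j k l)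
  simpa [gg, map_mul, map_smul] using h

lemma list_prod_mul_g {n : ℕ} (θ : Matrix (Fin n) (Fin n) ℂ) (k l : Fin n) :
    ∀ L : List (Fin n × Fin n),
      (L.map fun p => gg θ p.1 p.2).prod * gg θ k l
        = (L.map fun p => (Qc θ p.1 p.2 k l) ^ 2).prod •
            (gg θ k l * (L.map fun p => gg θ p.1 p.2).prod) := by
  intro L
  induction L with
  | nil => simp
  | cons p L ih =>
    simp only [List.map_cons, List.prod_cons, mul_assoc, ih]
    rw [mul_smul_comm, ← mul_assoc, gg_comm θ p.1 p.2 k l, smul_mul_assoc,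
      smul_smul, mul_comm ((Qc θ p.1 p.2 k l) ^ 2), mul_assoc]

lemma prod_g_mul {n : ℕ} (θ : Matrix (Fin n) (Fin n) ℂ) (σ : Equiv.Perm (Fin n)) (k l : Fin n) :
    (List.ofFn fun i : Fin n => gg θ i (σ i)).prod * gg θ k l
      = (∏ i : Fin n, (Qc θ i (σ i) k l) ^ 2) •
          (gg θ k l * (List.ofFn fun i : Fin n => gg θ i (σ i)).prod) := by
  have h := list_prod_mul_g θ k l (List.ofFn fun i : Fin n => (i, σ i))
  simpa [List.map_ofFn, Function.comp_def, List.prod_ofFn] using h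

lemma coef_invariant {n : ℕ} (θ : Matrix (Fin n) (Fin n) ℂ) (σ : Equiv.Perm (Fin n))
    (k l : Fin n) :
    ∏ i : Fin n, (Qc θ i (σ i) k l) ^ 2 = ∏ i : Fin n, (Qc θ i i k l) ^ 2 := by
  simp only [Qc, mul_pow, Finset.prod_mul_distrib]
  rw [Equiv.prod_comp σ (fun j => (qc θ j l) ^ 2)]

lemma coef_ne_zero {n : ℕ} (θ : Matrix (Fin n) (Fin n) ℂ) (k l : Fin n) :
    (∏ i : Fin n, (Qc θ i i k l) ^ 2) ≠ 0 := by
  refine Finset.prod_ne_zero_iff.2 fun i _ => pow_ne_zero _ ?_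
  exact mul_ne_zero (Complex.exp_ne_zero _) (Complex.exp_ne_zero _)

lemma det_mul_g {n : ℕ} (θ : Matrix (Fin n) (Fin n) ℂ) (k l : Fin n) :
    detθ θ * gg θ k l = (∏ i : Fin n, (Qc θ i i k l) ^ 2) • (gg θ k l * detθ θ) := by
  rw [detθ, Finset.sum_mul, Finset.mul_sum, Finset.smul_sum]
  refine Finset.sum_congr rfl fun σ _ => ?_
  rw [smul_mul_assoc, prod_g_mul θ σ k l, coef_invariant θ σ k l, mul_smul_comm,
    smul_smul, smul_smul, mul_comm]

lemma mem_adjoin_gg {n : ℕ} (θ : Matrix (Fin n) (Fin n) ℂ) (a : GLθ θ) :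
    a ∈ Algebra.adjoin ℂ (Set.range fun p : Fin n × Fin n => gg θ p.1 p.2) := by
  obtain ⟨x, rfl⟩ := RingQuot.mkAlgHom_surjective ℂ (GLRel θ) a
  have hr : (Set.range fun p : Fin n × Fin n => gg θ p.1 p.2)
      = (RingQuot.mkAlgHom ℂ (GLRel θ)) '' Set.range (FreeAlgebra.ι ℂ) := by
    rw [← Set.range_comp]; rfl
  rw [hr, ← AlgHom.map_adjoin, FreeAlgebra.adjoin_range_ι]
  exact ⟨x, trivial, rfl⟩

/-- the quantum determinant satisfies
`det_θ · g_{kl} = (∏_{i=1}^n Q²_{ii;kl}) g_{kl} · det_θ` for all `k, l`; in particular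
`det_θ · A = A · det_θ`, i.e. `det_θ` is a normal element. -/
theorem detθ_normal {n : ℕ} (θ : Matrix (Fin n) (Fin n) ℂ)
    (hθ : ∀ i j, θ j i = -θ i j) :
    (∀ k l : Fin n,
      detθ θ * gg θ k l = (∏ i : Fin n, (Qc θ i i k l) ^ 2) • (gg θ k l * detθ θ)) ∧
    (∀ a : GLθ θ, ∃ b : GLθ θ, detθ θ * a = b * detθ θ) ∧
    (∀ a : GLθ θ, ∃ b : GLθ θ, a * detθ θ = detθ θ * b) := by
  refine ⟨fun k l => det_mul_g θ k l, fun a => ?_, fun a => ?_⟩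
  · refine Algebra.adjoin_induction (p := fun x _ => ∃ b : GLθ θ, detθ θ * x = b * detθ θ)
      ?_ ?_ ?_ ?_ (mem_adjoin_gg θ a)
    · rintro x ⟨⟨k, l⟩, rfl⟩
      exact ⟨(∏ i : Fin n, (Qc θ i i k l) ^ 2) • gg θ k l, by
        rw [det_mul_g θ k l, smul_mul_assoc]⟩
    · intro r
      exact ⟨algebraMap ℂ (GLθ θ) r, (Algebra.commutes r (detθ θ)).symm ▸ by
        rw [← Algebra.commutes r (detθ θ)]⟩
    · rintro x y _ _ ⟨b, hb⟩ ⟨c, hc⟩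
      exact ⟨b + c, by rw [mul_add, hb, hc, add_mul]⟩
    · rintro x y _ _ ⟨b, hb⟩ ⟨c, hc⟩
      exact ⟨b * c, by rw [← mul_assoc, hb, mul_assoc, hc, ← mul_assoc]⟩
  · refine Algebra.adjoin_induction (p := fun x _ => ∃ b : GLθ θ, x * detθ θ = detθ θ * b)
      ?_ ?_ ?_ ?_ (mem_adjoin_gg θ a)
    · rintro x ⟨⟨k, l⟩, rfl⟩
      refine ⟨(∏ i : Fin n, (Qc θ i i k l) ^ 2)⁻¹ • gg θ k l, ?_⟩
      have h := det_mul_g θ k l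
      have hC := coef_ne_zero θ k l
      show gg θ k l * detθ θ = detθ θ * ((∏ i : Fin n, (Qc θ i i k l) ^ 2)⁻¹ • gg θ k l)
      rw [mul_smul_comm, h, inv_smul_smul₀ hC]
    · intro r
      exact ⟨algebraMap ℂ (GLθ θ) r, Algebra.commutes r (detθ θ)⟩
    · rintro x y _ _ ⟨b, hb⟩ ⟨c, hc⟩
      exact ⟨b + c, by rw [add_mul, hb, hc, mul_add]⟩
    · rintro x y _ _ ⟨b, hb⟩ ⟨c, hc⟩
      exact ⟨b * c, by rw [mul_assoc, hc, ← mul_assoc, hb, mul_assoc]⟩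
end
end

section
/- In the twisted coordinate algebra of GL_θ(n) with relations g_{ij} g_{kl} = Q²_{ij;kl} g_{kl} g_{ij}, the quantum determinant det_θ is central if and only if ∑_{k=1}^n θ^{ki} ≡ ∑_{k=1}^n θ^{kj} (mod 2π) for all i,j = 1,…,n. -/
noncomputable section

namespace DP

variable {n : ℕ}

abbrev Mon (n : ℕ) := (Fin n × Fin n) →₀ ℕ
abbrev V (n : ℕ) := Mon n →₀ ℂ

def ee (p : Fin n × Fin n) : Mon n := Finsupp.single p 1

def Q2 (θ : Matrix (Fin n) (Fin n) ℂ) (p q : Fin n × Fin n) : ℂ :=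
  (Qc θ p.1 p.2 q.1 q.2) ^ 2

lemma Q2_eq (θ : Matrix (Fin n) (Fin n) ℂ) (p q : Fin n × Fin n) :
    Q2 θ p q = Complex.exp (Complex.I * (θ q.1 p.1 + θ p.2 q.2)) := by
  unfold Q2 Qc qc
  rw [mul_pow, sq, sq, ← Complex.exp_add, ← Complex.exp_add, ← Complex.exp_add]
  congr 1; ring

lemma Q2_ne_zero (θ : Matrix (Fin n) (Fin n) ℂ) (p q : Fin n × Fin n) : Q2 θ p q ≠ 0 := by
  rw [Q2_eq]; exact Complex.exp_ne_zero _

variable {θ : Matrix (Fin n) (Fin n) ℂ}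

lemma theta_diag (hθ : ∀ i j, θ j i = -θ i j) (i : Fin n) : θ i i = 0 := by
  have h := hθ i i; linear_combination h / 2

lemma Q2_self (hθ : ∀ i j, θ j i = -θ i j) (p : Fin n × Fin n) : Q2 θ p p = 1 := by
  rw [Q2_eq, theta_diag hθ, theta_diag hθ]
  simp

lemma Q2_mul_symm (hθ : ∀ i j, θ j i = -θ i j) (p q : Fin n × Fin n) :
    Q2 θ p q * Q2 θ q p = 1 := by
  rw [Q2_eq, Q2_eq, ← Complex.exp_add, hθ q.1 p.1, hθ p.2 q.2]
  rw [show Complex.I * (θ q.1 p.1 + θ p.2 q.2) +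
      Complex.I * (-θ q.1 p.1 + -θ p.2 q.2) = 0 by ring, Complex.exp_zero]

def lam (θ : Matrix (Fin n) (Fin n) ℂ) (p q : Fin n × Fin n) : ℂ :=
  if toLex p ≤ toLex q then Q2 θ p q else 1

lemma lam_ne_zero (p q : Fin n × Fin n) : lam θ p q ≠ 0 := by
  unfold lam; split
  · exact Q2_ne_zero θ p q
  · exact one_ne_zero

lemma lam_rel (hθ : ∀ i j, θ j i = -θ i j) (p q : Fin n × Fin n) :
    lam θ p q = Q2 θ p q * lam θ q p := by
  unfold lam
  by_cases h : toLex p ≤ toLex q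
  · by_cases h' : toLex q ≤ toLex p
    · have hpq : p = q := toLex.injective (le_antisymm h h')
      subst hpq
      simp [Q2_self hθ]
    · rw [if_pos h, if_neg h', mul_one]
  · have h' : toLex q ≤ toLex p := (le_total _ _).resolve_left h
    rw [if_neg h, if_pos h']
    exact (Q2_mul_symm hθ p q).symm

def cmul (θ : Matrix (Fin n) (Fin n) ℂ) (p : Fin n × Fin n) (m : Mon n) : ℂ :=
  m.prod fun q k => lam θ p q ^ k

lemma cmul_ne_zero (p : Fin n × Fin n) (m : Mon n) : cmul θ p m ≠ 0 :=
  Finset.prod_ne_zero_iff.mpr fun q _ => pow_ne_zero _ (lam_ne_zero p q)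

lemma cmul_add_single (p q : Fin n × Fin n) (m : Mon n) :
    cmul θ p (m + ee q) = cmul θ p m * lam θ p q := by
  unfold cmul ee
  rw [Finsupp.prod_add_index' (fun _ => pow_zero _) (fun a b c => pow_add _ _ _)]
  congr 1
  have : ((Finsupp.single q 1 : Mon n).prod fun x k => lam θ p x ^ k) = lam θ p q ^ (1:ℕ) :=
    Finsupp.prod_single_index (pow_zero _)
  rw [this, pow_one]


def T (θ : Matrix (Fin n) (Fin n) ℂ) (p : Fin n × Fin n) : Module.End ℂ (V n) :=
  Finsupp.lsum ℂ fun m => cmul θ p m • Finsupp.lsingle (m + ee p)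

lemma T_single (p : Fin n × Fin n) (m : Mon n) (a : ℂ) :
    T θ p (Finsupp.single m a) = (cmul θ p m * a) • Finsupp.single (m + ee p) 1 := by
  simp [T, Finsupp.lsum_single, Finsupp.smul_single, smul_smul, mul_comm]

lemma T_comm (hθ : ∀ i j, θ j i = -θ i j) (p q : Fin n × Fin n) :
    T θ p * T θ q = Q2 θ p q • (T θ q * T θ p) := by
  apply Finsupp.lhom_ext
  intro m a
  simp only [Module.End.mul_apply, LinearMap.smul_apply, T_single, map_smul, smul_smul, mul_one]
  rw [cmul_add_single, cmul_add_single, add_right_comm, lam_rel hθ p q]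
  congr 1
  ring


def Tlift (θ : Matrix (Fin n) (Fin n) ℂ) :
    FreeAlgebra ℂ (Fin n × Fin n) →ₐ[ℂ] Module.End ℂ (V n) :=
  FreeAlgebra.lift ℂ (T θ)

def phi (hθ : ∀ i j, θ j i = -θ i j) : GLθ θ →ₐ[ℂ] Module.End ℂ (V n) :=
  RingQuot.liftAlgHom ℂ ⟨Tlift θ, by
    rintro x y ⟨i, j, k, l⟩
    simp only [map_mul, map_smul, Tlift, FreeAlgebra.lift_ι_apply]
    exact T_comm hθ (i, j) (k, l)⟩

lemma phi_gg (hθ : ∀ i j, θ j i = -θ i j) (i j : Fin n) :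
    phi hθ (gg θ i j) = T θ (i, j) := by
  rw [gg, phi, RingQuot.liftAlgHom_mkAlgHom_apply]
  simp [Tlift]

lemma gg_rel (i j k l : Fin n) :
    gg θ i j * gg θ k l = Q2 θ (i, j) (k, l) • (gg θ k l * gg θ i j) := by
  have h := RingQuot.mkAlgHom_rel ℂ (GLRel.rel (θ := θ) i j k l)
  simpa [gg, map_mul, map_smul, Q2] using h


lemma prod_gg_mul (k l : Fin n) :
    ∀ L : List (Fin n × Fin n),
      (L.map fun p => gg θ p.1 p.2).prod * gg θ k l =
        (L.map fun p => Q2 θ p (k, l)).prod •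
          (gg θ k l * (L.map fun p => gg θ p.1 p.2).prod)
  | [] => by simp
  | p :: L => by
    simp only [List.map_cons, List.prod_cons]
    rw [mul_assoc, prod_gg_mul k l L, mul_smul_comm, ← mul_assoc, gg_rel p.1 p.2 k l,
      smul_mul_assoc, smul_smul, ← mul_assoc, mul_comm (Q2 θ (p.1, p.2) (k, l)), mul_assoc]

lemma factor_eq (σ : Equiv.Perm (Fin n)) (k l : Fin n) :
    ((List.ofFn fun i => (i, σ i)).map fun p => Q2 θ p (k, l)).prod =
      Complex.exp (Complex.I * ((∑ i, θ k i) + ∑ j, θ j l)) := by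
  rw [List.map_ofFn, List.prod_ofFn]
  have h1 : ∀ i : Fin n, ((fun p => Q2 θ p (k, l)) ∘ fun i => (i, σ i)) i =
      Complex.exp (Complex.I * (θ k i + θ (σ i) l)) :=
    fun i => Q2_eq θ (i, σ i) (k, l)
  rw [Finset.prod_congr rfl fun i _ => h1 i, ← Complex.exp_sum]
  congr 1
  have h2 : ∑ i, θ (σ i) l = ∑ j, θ j l := Equiv.sum_comp σ fun j => θ j l
  rw [← h2, ← Finset.sum_add_distrib, Finset.mul_sum]


lemma det_mul_g (k l : Fin n) :
    detθ θ * gg θ k l =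
      Complex.exp (Complex.I * ((∑ i, θ k i) + ∑ j, θ j l)) • (gg θ k l * detθ θ) := by
  unfold detθ
  rw [Finset.sum_mul, Finset.mul_sum, Finset.smul_sum]
  refine Finset.sum_congr rfl fun σ _ => ?_
  rw [smul_mul_assoc, mul_smul_comm, smul_comm]
  congr 1
  have hmap : (List.ofFn fun i : Fin n => gg θ i (σ i)) =
      ((List.ofFn fun i => (i, σ i)).map fun p => gg θ p.1 p.2) := by
    rw [List.map_ofFn]; rfl
  rw [hmap, prod_gg_mul, factor_eq]


def Msig (σ : Equiv.Perm (Fin n)) : Mon n := ∑ i, ee (i, σ i)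

lemma Msig_apply (σ : Equiv.Perm (Fin n)) (i j : Fin n) :
    Msig σ (i, j) = if σ i = j then 1 else 0 := by
  unfold Msig ee
  rw [Finsupp.finset_sum_apply]
  rw [Finset.sum_eq_single i]
  · rw [Finsupp.single_apply]
    by_cases h : σ i = j
    · rw [if_pos h, if_pos (by rw [h])]
    · rw [if_neg h, if_neg (by simp [h])]
  · intro b _ hb
    rw [Finsupp.single_apply, if_neg (by simp [hb])]
  · intro h; exact absurd (Finset.mem_univ i) h

lemma Msig_inj (σ τ : Equiv.Perm (Fin n)) (h : Msig σ = Msig τ) : σ = τ := by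
  apply Equiv.ext
  intro i
  have h1 := congrArg (fun f => f (i, σ i)) h
  simp only [Msig_apply, if_true, eq_self_iff_true] at h1
  by_contra hne
  rw [if_neg fun hc => hne hc.symm] at h1
  exact one_ne_zero h1

lemma prodT_single :
    ∀ (L : List (Fin n × Fin n)) (m : Mon n),
      ∃ s : ℂ, s ≠ 0 ∧ (L.map (T θ)).prod (Finsupp.single m 1) =
        s • Finsupp.single (m + (L.map ee).sum) 1
  | [], m => ⟨1, one_ne_zero, by simp⟩
  | p :: L, m => by
    obtain ⟨s, hs, hval⟩ := prodT_single L m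
    refine ⟨s * cmul θ p (m + (L.map ee).sum),
      mul_ne_zero hs (cmul_ne_zero _ _), ?_⟩
    simp only [List.map_cons, List.prod_cons, Module.End.mul_apply, hval, map_smul,
      T_single, mul_one, smul_smul]
    congr 2
    rw [List.sum_cons]
    abel


def coeff (θ : Matrix (Fin n) (Fin n) ℂ) (σ : Equiv.Perm (Fin n)) : ℂ :=
  ((Equiv.Perm.sign σ : ℤ) : ℂ) *
    ∏ p ∈ Finset.univ.filter (fun p : Fin n × Fin n => p.1 < p.2),
      Qc θ p.2 (σ p.2) p.1 (σ p.1)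

lemma detθ_eq : detθ θ = ∑ σ : Equiv.Perm (Fin n),
    coeff θ σ • (List.ofFn fun i : Fin n => gg θ i (σ i)).prod := rfl

lemma coeff_ne_zero (σ : Equiv.Perm (Fin n)) : coeff θ σ ≠ 0 := by
  apply mul_ne_zero
  · exact Int.cast_ne_zero.mpr (Units.ne_zero _)
  · refine Finset.prod_ne_zero_iff.mpr fun p _ => ?_
    unfold Qc qc
    exact mul_ne_zero (Complex.exp_ne_zero _) (Complex.exp_ne_zero _)


lemma smul_eq_one (hθ : ∀ i j, θ j i = -θ i j) (k l : Fin n) (c : ℂ)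
    (h : c • (gg θ k l * detθ θ) = gg θ k l * detθ θ) : c = 1 := by
  classical
  set φ := phi hθ with hφ
  have hps : ∀ σ : Equiv.Perm (Fin n), ∃ s : ℂ, s ≠ 0 ∧
      ((List.ofFn fun i => T θ (i, σ i)).prod) (Finsupp.single (0 : Mon n) 1) =
        s • Finsupp.single (Msig σ) 1 := by
    intro σ
    obtain ⟨s, hs, hval⟩ := prodT_single (θ := θ) (List.ofFn fun i => (i, σ i)) 0
    refine ⟨s, hs, ?_⟩
    rw [show (List.ofFn fun i => T θ (i, σ i)) =
        (List.ofFn fun i => (i, σ i)).map (T θ) by rw [List.map_ofFn]; rfl]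
    rw [hval]
    congr 2
    rw [zero_add, List.map_ofFn, List.sum_ofFn]
    rfl
  choose s hs hval using hps
  have hphidet : φ (detθ θ) (Finsupp.single (0 : Mon n) 1) =
      ∑ σ : Equiv.Perm (Fin n), (coeff θ σ * s σ) • Finsupp.single (Msig σ) 1 := by
    rw [detθ_eq, map_sum, LinearMap.sum_apply]
    refine Finset.sum_congr rfl fun σ _ => ?_
    rw [map_smul, LinearMap.smul_apply, map_list_prod]
    have hm : (List.ofFn fun i : Fin n => gg θ i (σ i)).map φ =
        List.ofFn fun i => T θ (i, σ i) := by
      rw [List.map_ofFn]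
      exact congrArg List.ofFn (funext fun i => phi_gg hθ i (σ i))
    rw [hm, hval σ, smul_smul]
  have happ : φ (gg θ k l * detθ θ) (Finsupp.single (0 : Mon n) 1) (Msig 1 + ee (k, l)) =
      (coeff θ 1 * s 1) * cmul θ (k, l) (Msig 1) := by
    rw [map_mul, Module.End.mul_apply, hphidet, phi_gg hθ k l, map_sum]
    have hterm : ∀ σ : Equiv.Perm (Fin n),
        T θ (k, l) ((coeff θ σ * s σ) • Finsupp.single (Msig σ) 1) =
          (coeff θ σ * s σ * cmul θ (k, l) (Msig σ)) •
            Finsupp.single (Msig σ + ee (k, l)) 1 := by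
      intro σ
      rw [map_smul, T_single, mul_one, smul_smul]
    rw [Finset.sum_congr rfl fun σ _ => hterm σ, Finsupp.finset_sum_apply]
    rw [Finset.sum_eq_single (1 : Equiv.Perm (Fin n))]
    · rw [Finsupp.smul_apply, Finsupp.single_apply, if_pos rfl, smul_eq_mul, mul_one]
    · intro σ _ hσ
      rw [Finsupp.smul_apply, Finsupp.single_apply, if_neg, smul_zero]
      intro hc
      exact hσ (Msig_inj σ 1 (add_right_cancel hc))
    · intro hmem; exact absurd (Finset.mem_univ _) hmem
  have ht : φ (gg θ k l * detθ θ) (Finsupp.single (0 : Mon n) 1) (Msig 1 + ee (k, l)) ≠ 0 := by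
    rw [happ]
    exact mul_ne_zero (mul_ne_zero (coeff_ne_zero 1) (hs 1)) (cmul_ne_zero _ _)
  have h2 := congrArg (fun z => φ z (Finsupp.single (0 : Mon n) 1) (Msig 1 + ee (k, l))) h
  simp only [map_smul, LinearMap.smul_apply, Finsupp.smul_apply, smul_eq_mul] at h2
  exact mul_right_cancel₀ ht (h2.trans (one_mul _).symm)

end DP

/-- `det_θ` is central in the twisted coordinate algebra of `GL_θ(n)` if and only
if `∑_{k=1}^n θ^{ki} ≡ ∑_{k=1}^n θ^{kj} (mod 2π)` for all `i, j = 1, …, n`. -/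
theorem detθ_central_iff {n : ℕ} (θ : Matrix (Fin n) (Fin n) ℂ)
    (hθ : ∀ i j, θ j i = -θ i j) :
    (∀ a : GLθ θ, detθ θ * a = a * detθ θ) ↔
      (∀ i j : Fin n, ∃ m : ℤ,
        (∑ k, θ k i) = (∑ k, θ k j) + 2 * (Real.pi : ℂ) * (m : ℂ)) := by
  have hrow : ∀ r : Fin n, ∑ t, θ r t = -∑ t, θ t r := by
    intro r
    rw [← Finset.sum_neg_distrib]
    exact Finset.sum_congr rfl fun t _ => hθ t r
  constructor
  · intro h i j
    have hd := DP.det_mul_g (θ := θ) j i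
    have hc := hd.symm.trans (h (gg θ j i))
    have h1 := DP.smul_eq_one hθ j i _ hc
    obtain ⟨m, hm⟩ := Complex.exp_eq_one_iff.mp h1
    refine ⟨m, ?_⟩
    rw [hrow j] at hm
    have h4 : Complex.I * (-∑ t, θ t j + ∑ t, θ t i) =
        Complex.I * (2 * (Real.pi : ℂ) * (m : ℂ)) := by rw [hm]; ring
    have h5 := mul_left_cancel₀ Complex.I_ne_zero h4
    linear_combination h5
  · intro h a
    have hgen : ∀ k l, detθ θ * gg θ k l = gg θ k l * detθ θ := by
      intro k l
      rw [DP.det_mul_g]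
      obtain ⟨m, hm⟩ := h l k
      have harg : Complex.I * ((∑ i, θ k i) + ∑ jj, θ jj l) =
          (m : ℂ) * (2 * (Real.pi : ℂ) * Complex.I) := by
        rw [hrow k, hm]; ring
      rw [harg, Complex.exp_int_mul_two_pi_mul_I, one_smul]
    obtain ⟨x, rfl⟩ := RingQuot.mkAlgHom_surjective ℂ (GLRel θ) a
    induction x using FreeAlgebra.induction with
    | grade0 r =>
        rw [AlgHom.commutes]
        exact (Algebra.commutes r (detθ θ)).symm
    | grade1 p => exact hgen p.1 p.2
    | mul x y hx hy => rw [map_mul, ← mul_assoc, hx, mul_assoc, hy, mul_assoc]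
    | add x y hx hy => rw [map_add, mul_add, add_mul, hx, hy]
end
end

section
/- Let Λ^{IJ} denote the quantum minor of order d (rows I, columns J) and Λ^{I'J'} a quantum minor of order d' in the twisted coordinate algebra of GL_θ(n). Suppose each product g_{ij} g_{kl} satisfies g_{ij} g_{kl} = Q²_{ij;kl} g_{kl} g_{ij} with Q_{ij;kl} = q_{ki} q_{jl}. Then Λ^{IJ} Λ^{I'J'} = R²_{IJ;I'J'} Λ^{I'J'} Λ^{IJ}, where R_{IJ;I'J'} = ∏_{α=1}^d ∏_{α'=1}^{d'} Q_{i_α j_α; i'_{α'} j'_{α'}}. In particular the quantum minors of a fixed order d generate a subalgebra. -/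
noncomputable section

/-- The quantum minor `Λ^{IJ}` of order `d` on the rows `I` and columns `J` of the quantum
matrix `(g_{ij})`, given by the twisted Leibniz formula (the `(1/d!) ε_θ^{(r)} ε_θ^{(c)}`
formula written as a sum over permutations with the twisted weights). -/
def qminor {n d : ℕ} (θ : Matrix (Fin n) (Fin n) ℂ) {A : Type*} [Ring A] [Algebra ℂ A]
    (g : Fin n → Fin n → A) (I J : Fin d → Fin n) : A :=
  ∑ σ : Equiv.Perm (Fin d),
    (((Equiv.Perm.sign σ : ℤ) : ℂ) *
      ∏ p ∈ Finset.univ.filter (fun p : Fin d × Fin d => p.1 < p.2),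
        Qc θ (I p.2) (J (σ p.2)) (I p.1) (J (σ p.1))) •
      (List.ofFn fun a : Fin d => g (I a) (J (σ a))).prod

lemma aux_single {A : Type*} [Ring A] [Algebra ℂ A] :
    ∀ {d : ℕ} (v : Fin d → A) (b : A) (t : Fin d → ℂ),
      (∀ j, b * v j = t j • (v j * b)) →
      b * (List.ofFn v).prod = (∏ j, t j) • ((List.ofFn v).prod * b)
  | 0, v, b, t, h => by simp
  | (d+1), v, b, t, h => by
      rw [List.ofFn_succ, List.prod_cons, Fin.prod_univ_succ, ← mul_assoc, h 0,
        smul_mul_assoc, mul_assoc,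
        aux_single (fun j => v j.succ) b (fun j => t j.succ) (fun j => h j.succ),
        mul_smul_comm, smul_smul, ← mul_assoc]

lemma aux_pair {A : Type*} [Ring A] [Algebra ℂ A] {d' : ℕ} :
    ∀ {d : ℕ} (u : Fin d → A) (v : Fin d' → A) (s : Fin d → Fin d' → ℂ),
      (∀ a b, u a * v b = s a b • (v b * u a)) →
      (List.ofFn u).prod * (List.ofFn v).prod =
        (∏ a, ∏ b, s a b) • ((List.ofFn v).prod * (List.ofFn u).prod)
  | 0, u, v, s, h => by simp
  | (d+1), u, v, s, h => by
      rw [List.ofFn_succ (f := u), List.prod_cons, Fin.prod_univ_succ, mul_assoc,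
        aux_pair (fun a => u a.succ) v (fun a b => s a.succ b) (fun a b => h a.succ b),
        mul_smul_comm, ← mul_assoc, aux_single v (u 0) (fun b => s 0 b) (fun b => h 0 b),
        smul_mul_assoc, smul_smul, mul_assoc, mul_comm]

lemma Rinv {n d d' : ℕ} (θ : Matrix (Fin n) (Fin n) ℂ)
    (I J : Fin d → Fin n) (I' J' : Fin d' → Fin n)
    (σ : Equiv.Perm (Fin d)) (σ' : Equiv.Perm (Fin d')) :
    ∏ a, ∏ b, Qc θ (I a) (J (σ a)) (I' b) (J' (σ' b)) =
      ∏ a, ∏ b, Qc θ (I a) (J a) (I' b) (J' b) := by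
  simp only [Qc, Finset.prod_mul_distrib]
  congr 1
  rw [Equiv.prod_comp σ (fun a => ∏ b, qc θ (J a) (J' (σ' b)))]
  exact Finset.prod_congr rfl fun a _ =>
    Equiv.prod_comp σ' (fun b => qc θ (J a) (J' b))

/-- if the quantum matrix entries satisfy `g_{ij} g_{kl} = Q²_{ij;kl} g_{kl} g_{ij}`
with `Q_{ij;kl} = q_{ki} q_{jl}`, then quantum minors of orders `d` and `d'` satisfy
`Λ^{IJ} Λ^{I'J'} = R²_{IJ;I'J'} Λ^{I'J'} Λ^{IJ}` where
`R_{IJ;I'J'} = ∏_{α=1}^d ∏_{α'=1}^{d'} Q_{i_α j_α; i'_{α'} j'_{α'}}`.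
In particular the minors of a fixed order `d` pairwise `q`-commute and hence generate a
subalgebra. -/
theorem qminor_commutation {n d d' : ℕ} (θ : Matrix (Fin n) (Fin n) ℂ)
    (hθ : ∀ i j, θ j i = -θ i j) {A : Type*} [Ring A] [Algebra ℂ A]
    (g : Fin n → Fin n → A)
    (hrel : ∀ i j k l, g i j * g k l = (Qc θ i j k l) ^ 2 • (g k l * g i j))
    (I J : Fin d → Fin n) (I' J' : Fin d' → Fin n) :
    qminor θ g I J * qminor θ g I' J' =
      (∏ α : Fin d, ∏ α' : Fin d', Qc θ (I α) (J α) (I' α') (J' α')) ^ 2 •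
        (qminor θ g I' J' * qminor θ g I J) := by
  classical
  simp only [qminor, Finset.sum_mul_sum, smul_mul_assoc, mul_smul_comm, smul_smul,
    Finset.smul_sum]
  rw [Finset.sum_comm]
  refine Finset.sum_congr rfl fun σ' _ => Finset.sum_congr rfl fun σ _ => ?_
  rw [aux_pair (fun a => g (I a) (J (σ a))) (fun b => g (I' b) (J' (σ' b)))
      (fun a b => (Qc θ (I a) (J (σ a)) (I' b) (J' (σ' b))) ^ 2)
      (fun a b => hrel _ _ _ _), smul_smul]
  congr 1
  have h1 : ∏ a, ∏ b, (Qc θ (I a) (J (σ a)) (I' b) (J' (σ' b))) ^ 2 =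
      (∏ α : Fin d, ∏ α' : Fin d', Qc θ (I α) (J α) (I' α') (J' α')) ^ 2 := by
    simp only [Finset.prod_pow]
    rw [Rinv]
  rw [h1]; ring
end
end

section
/- Let A^! be the ℂ-algebra generated by w̌₁,…,w̌_{n+1} with relations w̌_i² = 0 for all i, w̌_i w̌_{n+1} + w̌_{n+1} w̌_i = 0 for i ≤ n, and w̌_i w̌_j + q_{ij}² w̌_j w̌_i = 0 for i,j ≤ n (i ≠ j). Then A^! is a graded Frobenius algebra of index n+1: A^!_k = 0 for k > n+1, dim_ℂ A^!_k = C(n+1, k) for 0 ≤ k ≤ n+1 (in particular A^!_{n+1} ≅ ℂ), and the multiplication map A^!_k ⊗ A^!_{n+1−k} → A^!_{n+1} is a nondegenerate pairing for each k. -/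
noncomputable section

/-- Relations of the Koszul dual `A^!`: `w̌_i² = 0`, `w̌_i w̌_{n+1} + w̌_{n+1} w̌_i = 0` for
`i ≤ n`, and `w̌_i w̌_j + q_{ij}² w̌_j w̌_i = 0` for `i ≠ j ≤ n`. -/
inductive KoszulRel {n : ℕ} (θ : Matrix (Fin n) (Fin n) ℂ) :
    FreeAlgebra ℂ (Fin (n + 1)) → FreeAlgebra ℂ (Fin (n + 1)) → Prop
  | sq (i : Fin (n + 1)) :
      KoszulRel θ (FreeAlgebra.ι ℂ i * FreeAlgebra.ι ℂ i) 0
  | antiLast (i : Fin n) :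
      KoszulRel θ (FreeAlgebra.ι ℂ i.castSucc * FreeAlgebra.ι ℂ (Fin.last n) +
        FreeAlgebra.ι ℂ (Fin.last n) * FreeAlgebra.ι ℂ i.castSucc) 0
  | anti (i j : Fin n) (h : i ≠ j) :
      KoszulRel θ (FreeAlgebra.ι ℂ i.castSucc * FreeAlgebra.ι ℂ j.castSucc +
        (qc θ i j) ^ 2 • (FreeAlgebra.ι ℂ j.castSucc * FreeAlgebra.ι ℂ i.castSucc)) 0

/-- The Koszul dual algebra `A^!`, a deformed exterior algebra on `n+1` generators. -/
abbrev KoszulDual {n : ℕ} (θ : Matrix (Fin n) (Fin n) ℂ) := RingQuot (KoszulRel θ)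

/-- The generator `w̌_i` of `A^!`. -/
def V {n : ℕ} (θ : Matrix (Fin n) (Fin n) ℂ) (i : Fin (n + 1)) : KoszulDual θ :=
  RingQuot.mkAlgHom ℂ (KoszulRel θ) (FreeAlgebra.ι ℂ i)

/-- The degree-`k` component `A^!_k` of `A^!`: the span of products of `k` generators. -/
def KD {n : ℕ} (θ : Matrix (Fin n) (Fin n) ℂ) (k : ℕ) : Submodule ℂ (KoszulDual θ) :=
  Submodule.span ℂ
    {x : KoszulDual θ | ∃ f : Fin k → Fin (n + 1), x = (List.ofFn fun t => V θ (f t)).prod}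

/-- the scalar κ_{ij}: `q_{ij}²` when both indices are < n, else `1`. -/
def kap {n : ℕ} (θ : Matrix (Fin n) (Fin n) ℂ) (i j : Fin (n + 1)) : ℂ :=
  if h : (i : ℕ) < n ∧ (j : ℕ) < n then (qc θ (i.castLT h.1) (j.castLT h.2)) ^ 2 else 1

/-- the commutation scalar c_{ij} = -κ_{ij}, with `w_i w_j = c_{ij} w_j w_i`. -/
def cc {n : ℕ} (θ : Matrix (Fin n) (Fin n) ℂ) (i j : Fin (n + 1)) : ℂ := -(kap θ i j)

lemma qc_sq_mul {n : ℕ} {θ : Matrix (Fin n) (Fin n) ℂ} (hθ : ∀ i j, θ j i = -θ i j)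
    (a b : Fin n) : qc θ a b ^ 2 * qc θ b a ^ 2 = 1 := by
  simp only [qc, ← Complex.exp_nat_mul, ← Complex.exp_add]
  rw [hθ a b]
  ring_nf
  exact Complex.exp_zero

lemma kap_mul {n : ℕ} {θ : Matrix (Fin n) (Fin n) ℂ} (hθ : ∀ i j, θ j i = -θ i j)
    (i j : Fin (n + 1)) : kap θ i j * kap θ j i = 1 := by
  unfold kap
  by_cases h : (i : ℕ) < n ∧ (j : ℕ) < n
  · rw [dif_pos h, dif_pos ⟨h.2, h.1⟩]
    exact qc_sq_mul hθ _ _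
  · rw [dif_neg h, dif_neg (fun h' => h ⟨h'.2, h'.1⟩), one_mul]

lemma kap_ne_zero {n : ℕ} (θ : Matrix (Fin n) (Fin n) ℂ) (i j : Fin (n + 1)) :
    kap θ i j ≠ 0 := by
  unfold kap
  split
  · exact pow_ne_zero _ (Complex.exp_ne_zero _)
  · exact one_ne_zero

lemma cc_ne_zero {n : ℕ} (θ : Matrix (Fin n) (Fin n) ℂ) (i j : Fin (n + 1)) :
    cc θ i j ≠ 0 := neg_ne_zero.2 (kap_ne_zero θ i j)

lemma V_sq {n : ℕ} (θ : Matrix (Fin n) (Fin n) ℂ) (i : Fin (n + 1)) :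
    V θ i * V θ i = 0 := by
  have := RingQuot.mkAlgHom_rel ℂ (KoszulRel.sq (θ := θ) i)
  simpa [V, map_mul] using this

lemma V_comm {n : ℕ} {θ : Matrix (Fin n) (Fin n) ℂ} (hθ : ∀ i j, θ j i = -θ i j)
    {i j : Fin (n + 1)} (hij : i ≠ j) :
    V θ i * V θ j = cc θ i j • (V θ j * V θ i) := by
  by_cases hi : (i : ℕ) < n
  · by_cases hj : (j : ℕ) < n
    · -- both castSucc
      have hne : i.castLT hi ≠ j.castLT hj := by
        intro h; apply hij; rw [← Fin.castSucc_castLT i hi, ← Fin.castSucc_castLT j hj, h]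
      have := RingQuot.mkAlgHom_rel ℂ (KoszulRel.anti (θ := θ) _ _ hne)
      rw [map_add, map_smul, map_mul, map_mul, map_zero] at this
      rw [Fin.castSucc_castLT i hi, Fin.castSucc_castLT j hj] at this
      have h2 : V θ i * V θ j = -((qc θ (i.castLT hi) (j.castLT hj)) ^ 2 • (V θ j * V θ i)) := by
        rw [eq_neg_iff_add_eq_zero]; exact this
      rw [h2, cc, kap, dif_pos ⟨hi, hj⟩]
      exact (neg_smul (R := ℂ) _ _).symm
    · -- j = last
      have hj' : j = Fin.last n := by
        ext; simp only [Fin.val_last]; omega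
      subst hj'
      have := RingQuot.mkAlgHom_rel ℂ (KoszulRel.antiLast (θ := θ) (i.castLT hi))
      rw [map_add, map_mul, map_mul, map_zero, Fin.castSucc_castLT i hi] at this
      have h2 : V θ i * V θ (Fin.last n) = -(V θ (Fin.last n) * V θ i) := by
        rw [eq_neg_iff_add_eq_zero]; exact this
      rw [h2, cc, kap, dif_neg (by push_neg; intro _; simp)]
      exact (neg_one_smul ℂ _).symm
  · have hi' : i = Fin.last n := by
      ext; simp only [Fin.val_last]; omega
    subst hi'
    have hj : (j : ℕ) < n := by
      by_contra h
      have := j.isLt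
      exact hij ((by ext; simp only [Fin.val_last]; omega : j = Fin.last n)).symm
    have := RingQuot.mkAlgHom_rel ℂ (KoszulRel.antiLast (θ := θ) (j.castLT hj))
    rw [map_add, map_mul, map_mul, map_zero, Fin.castSucc_castLT j hj] at this
    have h2 : V θ (Fin.last n) * V θ j = -(V θ j * V θ (Fin.last n)) := by
      rw [eq_neg_iff_add_eq_zero, add_comm]; exact this
    rw [h2, cc, kap, dif_neg (by push_neg; intro h; simp at h)]
    exact (neg_one_smul ℂ _).symm

section Model
variable {n : ℕ} (θ : Matrix (Fin n) (Fin n) ℂ)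

abbrev KModel (n : ℕ) := Finset (Fin (n + 1)) →₀ ℂ

def epsF (i : Fin (n+1)) (S : Finset (Fin (n+1))) : ℂ :=
  ∏ j ∈ S.filter (fun j => j < i), cc θ i j

lemma epsF_ne_zero (i : Fin (n+1)) (S : Finset (Fin (n+1))) : epsF θ i S ≠ 0 :=
  Finset.prod_ne_zero_iff.2 fun j _ => cc_ne_zero θ i j

lemma epsF_insert (i j : Fin (n+1)) (S : Finset (Fin (n+1))) (hj : j ∉ S) :
    epsF θ i (insert j S) = (if j < i then cc θ i j else 1) * epsF θ i S := by
  unfold epsF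
  rw [Finset.filter_insert]
  split
  · rw [Finset.prod_insert (fun hm => hj (Finset.mem_filter.1 hm).1)]
  · rw [one_mul]

def Lop (i : Fin (n+1)) : KModel n →ₗ[ℂ] KModel n :=
  Finsupp.lift (KModel n) ℂ _
    (fun S => if i ∈ S then 0 else epsF θ i S • Finsupp.single (insert i S) 1)

lemma Lop_single (i : Fin (n+1)) (S : Finset (Fin (n+1))) (b : ℂ) :
    Lop θ i (Finsupp.single S b) =
      if i ∈ S then 0 else (b * epsF θ i S) • Finsupp.single (insert i S) 1 := by
  rw [Lop, Finsupp.lift_apply, Finsupp.sum_single_index (by simp)]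
  simp only [smul_ite, smul_zero, smul_smul]

lemma Lop_sq (i : Fin (n+1)) : (Lop θ i ∘ₗ Lop θ i : KModel n →ₗ[ℂ] KModel n) = 0 := by
  apply Finsupp.lhom_ext
  intro S b
  simp only [LinearMap.comp_apply, Lop_single, LinearMap.zero_apply]
  by_cases h : i ∈ S
  · simp [h]
  · rw [if_neg h, map_smul, Lop_single, if_pos (Finset.mem_insert_self i S), smul_zero]

lemma key_scalar {θ : Matrix (Fin n) (Fin n) ℂ} (hθ : ∀ i j, θ j i = -θ i j)
    (i j : Fin (n+1)) (S : Finset (Fin (n+1))) (hij : i ≠ j) (hi : i ∉ S) (hj : j ∉ S) :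
    epsF θ j S * epsF θ i (insert j S) +
      kap θ i j * (epsF θ i S * epsF θ j (insert i S)) = 0 := by
  rw [epsF_insert θ i j S hj, epsF_insert θ j i S hi]
  rcases lt_trichotomy i j with h | h | h
  · rw [if_neg (asymm h), if_pos h]
    simp only [cc]
    linear_combination (-(epsF θ i S * epsF θ j S)) * kap_mul hθ i j
  · exact absurd h hij
  · rw [if_pos h, if_neg (asymm h)]
    simp only [cc]
    ring

lemma Lop_rel {θ : Matrix (Fin n) (Fin n) ℂ} (hθ : ∀ i j, θ j i = -θ i j)
    (i j : Fin (n+1)) (hij : i ≠ j) :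
    (Lop θ i ∘ₗ Lop θ j) + kap θ i j • (Lop θ j ∘ₗ Lop θ i) = 0 := by
  apply Finsupp.lhom_ext
  intro S b
  simp only [LinearMap.add_apply, LinearMap.comp_apply, LinearMap.smul_apply,
    LinearMap.zero_apply, Lop_single]
  by_cases hjS : j ∈ S
  · rw [if_pos hjS, map_zero]
    by_cases hiS : i ∈ S
    · rw [if_pos hiS, map_zero, smul_zero, add_zero]
    · rw [if_neg hiS, map_smul, Lop_single,
        if_pos (Finset.mem_insert_of_mem hjS), smul_zero, smul_zero, add_zero]
  · by_cases hiS : i ∈ S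
    · rw [if_pos hiS, map_zero, smul_zero, if_neg hjS, map_smul, Lop_single,
        if_pos (Finset.mem_insert_of_mem hiS), smul_zero, add_zero]
    · rw [if_neg hjS, if_neg hiS, map_smul, map_smul, Lop_single, Lop_single,
        if_neg (by simp [Finset.mem_insert, hij, hiS]),
        if_neg (by simp [Finset.mem_insert, Ne.symm hij, hjS])]
      rw [Finset.insert_comm j i S, smul_smul, smul_smul, smul_smul, ← add_smul]
      convert zero_smul ℂ ((Finsupp.single (insert i (insert j S)) 1 : KModel n)) using 2
      have := key_scalar hθ i j S hij hiS hjS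
      linear_combination b * this
end Model

section Rep
variable {n : ℕ} {θ : Matrix (Fin n) (Fin n) ℂ}

lemma kap_castSucc (θ : Matrix (Fin n) (Fin n) ℂ) (i j : Fin n) :
    kap θ i.castSucc j.castSucc = qc θ i j ^ 2 := by
  rw [kap, dif_pos ⟨by simp [i.isLt], by simp [j.isLt]⟩]
  rfl

lemma kap_last_right (θ : Matrix (Fin n) (Fin n) ℂ) (i : Fin (n+1)) :
    kap θ i (Fin.last n) = 1 := by
  rw [kap, dif_neg (by push_neg; intro _; simp)]

def phiFree (θ : Matrix (Fin n) (Fin n) ℂ) :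
    FreeAlgebra ℂ (Fin (n+1)) →ₐ[ℂ] Module.End ℂ (KModel n) :=
  FreeAlgebra.lift ℂ (fun i => Lop θ i)

lemma phiFree_rel (hθ : ∀ i j, θ j i = -θ i j) :
    ∀ ⦃x y⦄, KoszulRel θ x y → phiFree θ x = phiFree θ y := by
  intro x y h
  induction h with
  | sq i =>
      rw [map_mul, map_zero, phiFree, FreeAlgebra.lift_ι_apply]
      exact Lop_sq θ i
  | antiLast i =>
      rw [map_add, map_mul, map_mul, map_zero, phiFree, FreeAlgebra.lift_ι_apply,
        FreeAlgebra.lift_ι_apply]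
      have h := Lop_rel hθ i.castSucc (Fin.last n) (Fin.castSucc_lt_last i).ne
      rw [kap_last_right, one_smul] at h
      exact h
  | anti i j hij =>
      rw [map_add, map_smul, map_mul, map_mul, map_zero, phiFree, FreeAlgebra.lift_ι_apply,
        FreeAlgebra.lift_ι_apply]
      have h := Lop_rel hθ i.castSucc j.castSucc
        (fun hc => hij (Fin.castSucc_injective n hc))
      rw [kap_castSucc] at h
      exact h

def rep (hθ : ∀ i j, θ j i = -θ i j) : KoszulDual θ →ₐ[ℂ] Module.End ℂ (KModel n) :=
  RingQuot.liftAlgHom ℂ ⟨phiFree θ, phiFree_rel hθ⟩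

lemma rep_V (hθ : ∀ i j, θ j i = -θ i j) (i : Fin (n+1)) : rep hθ (V θ i) = Lop θ i := by
  rw [rep, V, RingQuot.liftAlgHom_mkAlgHom_apply, phiFree, FreeAlgebra.lift_ι_apply]
end Rep

section Lists
variable {n : ℕ} {θ : Matrix (Fin n) (Fin n) ℂ}

def Wl (θ : Matrix (Fin n) (Fin n) ℂ) (l : List (Fin (n+1))) : KoszulDual θ :=
  (l.map (V θ)).prod

@[simp] lemma Wl_nil : Wl θ [] = 1 := rfl

@[simp] lemma Wl_cons (a : Fin (n+1)) (l : List (Fin (n+1))) :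
    Wl θ (a :: l) = V θ a * Wl θ l := by
  simp [Wl]

def epsL (θ : Matrix (Fin n) (Fin n) ℂ) (i : Fin (n+1)) (l : List (Fin (n+1))) : ℂ :=
  ((l.filter (fun j => decide (j < i))).map (fun j => cc θ i j)).prod

lemma V_mul_Wl (hθ : ∀ i j, θ j i = -θ i j) (i : Fin (n+1)) :
    ∀ l : List (Fin (n+1)), l.Pairwise (· < ·) →
      V θ i * Wl θ l =
        if i ∈ l then 0 else epsL θ i l • Wl θ (l.orderedInsert (· ≤ ·) i) := by
  intro l
  induction l with
  | nil =>
      intro _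
      simp [epsL, List.orderedInsert]
  | cons a l' IH =>
      intro hl
      have hl' : l'.Pairwise (· < ·) := hl.of_cons
      have hmem : ∀ b ∈ l', a < b := (List.pairwise_cons.mp hl).1
      rcases lt_trichotomy i a with h | h | h
      · -- i < a : goes to the front
        have hnotmem : i ∉ a :: l' := by
          intro hm
          rcases List.mem_cons.mp hm with rfl | hm'
          · exact lt_irrefl i h
          · exact absurd (h.trans (hmem i hm')) (lt_irrefl i)
        rw [if_neg hnotmem]
        have heps : epsL θ i (a :: l') = 1 := by
          have : (a :: l').filter (fun j => decide (j < i)) = [] := by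
            rw [List.filter_eq_nil_iff]
            intro b hb
            simp only [decide_eq_true_eq]
            rcases List.mem_cons.mp hb with rfl | hb'
            · exact not_lt.2 h.le
            · exact not_lt.2 (h.trans (hmem b hb')).le
          rw [epsL, this]
          simp
        have hoi : (a :: l').orderedInsert (· ≤ ·) i = i :: a :: l' := by
          simp [List.orderedInsert, h.le]
        rw [heps, hoi, one_smul, Wl_cons, Wl_cons, Wl_cons]
      · -- i = a : square is zero
        subst h
        rw [if_pos (List.mem_cons_self), Wl_cons, ← mul_assoc, V_sq, zero_mul]
      · -- a < i : commute past a
        have hne : i ≠ a := ne_of_gt h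
        rw [Wl_cons, ← mul_assoc, V_comm hθ hne, smul_mul_assoc, mul_assoc, IH hl']
        have hoi : (a :: l').orderedInsert (· ≤ ·) i = a :: l'.orderedInsert (· ≤ ·) i := by
          simp [List.orderedInsert, not_le.2 h]
        have heps : epsL θ i (a :: l') = cc θ i a * epsL θ i l' := by
          rw [epsL, epsL, List.filter_cons, if_pos (by simpa using h)]
          simp
        by_cases hm : i ∈ l'
        · rw [if_pos hm, if_pos (List.mem_cons_of_mem a hm)]
          simp
        · rw [if_neg hm, if_neg (by simp [List.mem_cons, hne, hm])]
          rw [hoi, heps, Wl_cons, mul_smul_comm, smul_smul]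
end Lists

section Norm
variable {n : ℕ} {θ : Matrix (Fin n) (Fin n) ℂ}

lemma Wl_append (l₁ l₂ : List (Fin (n+1))) : Wl θ (l₁ ++ l₂) = Wl θ l₁ * Wl θ l₂ := by
  simp [Wl]

lemma Wl_norm (hθ : ∀ i j, θ j i = -θ i j) :
    ∀ l : List (Fin (n+1)),
      (¬ l.Nodup → Wl θ l = 0) ∧
      (l.Nodup → ∃ d : ℂ, Wl θ l = d • Wl θ (Finset.sort l.toFinset (· ≤ ·))) := by
  intro l
  induction l with
  | nil =>
      refine ⟨fun h => absurd List.nodup_nil h, fun _ => ⟨1, by simp [Finset.sort_empty]⟩⟩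
  | cons a l' IH =>
      by_cases hnd : l'.Nodup
      · obtain ⟨d, hd⟩ := IH.2 hnd
        have hm'sorted : (Finset.sort l'.toFinset (· ≤ ·)).Pairwise (· < ·) :=
          (Finset.sortedLT_sort l'.toFinset).pairwise
        constructor
        · intro hnod
          have ha : a ∈ l' := by
            by_contra hc
            exact hnod (List.nodup_cons.2 ⟨hc, hnd⟩)
          have ham' : a ∈ Finset.sort l'.toFinset (· ≤ ·) := by
            rw [Finset.mem_sort, List.mem_toFinset]; exact ha
          rw [Wl_cons, hd, mul_smul_comm, V_mul_Wl hθ a _ hm'sorted, if_pos ham', smul_zero]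
        · intro hnod
          have ha : a ∉ l' := (List.nodup_cons.1 hnod).1
          have ha' : a ∉ l'.toFinset := fun hc => ha (List.mem_toFinset.1 hc)
          have ham' : a ∉ Finset.sort l'.toFinset (· ≤ ·) := by
            rw [Finset.mem_sort]; exact ha'
          have hlist : List.orderedInsert (· ≤ ·) a (Finset.sort l'.toFinset (· ≤ ·)) =
              Finset.sort (a :: l').toFinset (· ≤ ·) := by
            refine List.Perm.eq_of_pairwise' ((Finset.pairwise_sort _ _).orderedInsert a _)
              (Finset.pairwise_sort _ _) ?_
            rw [List.toFinset_cons]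
            exact (List.perm_orderedInsert _ a _).trans
              (((Finset.sort_perm_toList _ _).cons a).trans
                (((Finset.toList_insert ha').symm).trans (Finset.sort_perm_toList _ _).symm))
          rw [Wl_cons, hd, mul_smul_comm, V_mul_Wl hθ a _ hm'sorted, if_neg ham', hlist,
            smul_smul]
          exact ⟨d * epsL θ a _, rfl⟩
      · have h0 : Wl θ l' = 0 := IH.1 hnd
        constructor
        · intro _; rw [Wl_cons, h0, mul_zero]
        · intro hnod; exact absurd (List.nodup_cons.1 hnod).2 hnd

lemma rep_Wl (hθ : ∀ i j, θ j i = -θ i j) :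
    ∀ l : List (Fin (n+1)), l.Nodup →
      ∃ d : ℂ, d ≠ 0 ∧
        rep hθ (Wl θ l) (Finsupp.single ∅ 1) = d • Finsupp.single l.toFinset 1 := by
  intro l
  induction l with
  | nil =>
      intro _
      refine ⟨1, one_ne_zero, ?_⟩
      rw [Wl_nil, map_one]
      simp
  | cons a l' IH =>
      intro hnod
      obtain ⟨ha, hnd⟩ := List.nodup_cons.1 hnod
      obtain ⟨d, hd0, hd⟩ := IH hnd
      have ha' : a ∉ l'.toFinset := fun hc => ha (List.mem_toFinset.1 hc)
      refine ⟨d * epsF θ a l'.toFinset, mul_ne_zero hd0 (epsF_ne_zero θ a _), ?_⟩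
      rw [Wl_cons, map_mul, Module.End.mul_apply, hd, rep_V, map_smul, Lop_single,
        if_neg ha', one_mul, smul_smul, List.toFinset_cons]

lemma Wl_mem_KD (l : List (Fin (n+1))) : Wl θ l ∈ KD θ l.length := by
  apply Submodule.subset_span
  refine ⟨fun t => l.get t, ?_⟩
  rw [Wl]
  conv_lhs => rw [← List.ofFn_get l]
  rw [List.map_ofFn]
  rfl
end Norm

section Main
variable {n : ℕ} {θ : Matrix (Fin n) (Fin n) ℂ}

def Bfam (θ : Matrix (Fin n) (Fin n) ℂ) (k : ℕ)
    (S : {S : Finset (Fin (n+1)) // S.card = k}) : KoszulDual θ :=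
  Wl θ (Finset.sort S.1 (· ≤ ·))

lemma Bfam_mem (k : ℕ) (S : {S : Finset (Fin (n+1)) // S.card = k}) :
    Bfam θ k S ∈ KD θ k := by
  have := Wl_mem_KD (θ := θ) (Finset.sort S.1 (· ≤ ·))
  rwa [Finset.length_sort, S.2] at this

lemma ofFn_prod_eq_Wl {k : ℕ} (f : Fin k → Fin (n+1)) :
    (List.ofFn fun t => V θ (f t)).prod = Wl θ (List.ofFn f) := by
  rw [Wl, List.map_ofFn]
  rfl

lemma KD_eq_span (hθ : ∀ i j, θ j i = -θ i j) (k : ℕ) :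
    KD θ k = Submodule.span ℂ (Set.range (Bfam θ k)) := by
  apply le_antisymm
  · rw [KD, Submodule.span_le]
    rintro x ⟨f, rfl⟩
    rw [SetLike.mem_coe, ofFn_prod_eq_Wl]
    by_cases hnd : (List.ofFn f).Nodup
    · obtain ⟨d, hd⟩ := (Wl_norm hθ _).2 hnd
      have hcard : (List.ofFn f).toFinset.card = k := by
        rw [List.toFinset_card_of_nodup hnd, List.length_ofFn]
      rw [hd]
      exact Submodule.smul_mem _ d (Submodule.subset_span ⟨⟨_, hcard⟩, rfl⟩)
    · rw [(Wl_norm hθ _).1 hnd]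
      exact Submodule.zero_mem _
  · rw [Submodule.span_le]
    rintro x ⟨S, rfl⟩
    exact Bfam_mem k S

def Phi (hθ : ∀ i j, θ j i = -θ i j) : KoszulDual θ →ₗ[ℂ] KModel n where
  toFun x := rep hθ x (Finsupp.single ∅ 1)
  map_add' x y := by rw [map_add]; rfl
  map_smul' c x := by rw [map_smul]; rfl

lemma lin_indep (hθ : ∀ i j, θ j i = -θ i j) (k : ℕ) :
    LinearIndependent ℂ (Bfam θ k) := by
  classical
  choose d hd0 hrep using fun (S : {S : Finset (Fin (n+1)) // S.card = k}) =>
    rep_Wl hθ (Finset.sort S.1 (· ≤ ·)) (Finset.sort_nodup _ _)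
  apply LinearIndependent.of_comp (Phi hθ)
  have hcomp : (Phi hθ) ∘ (Bfam θ k) = fun S => d S • Finsupp.single S.1 1 := by
    funext S
    have h := hrep S
    rw [Finset.sort_toFinset] at h
    exact h
  rw [hcomp]
  have hbase : LinearIndependent ℂ (fun S : {S : Finset (Fin (n+1)) // S.card = k} =>
      (Finsupp.single S.1 1 : KModel n)) := by
    have h : LinearIndependent ℂ
        (fun S : Finset (Fin (n+1)) => (Finsupp.single S 1 : KModel n)) :=
      Finsupp.basisSingleOne.linearIndependent
    exact h.comp Subtype.val Subtype.val_injective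
  have h2 := hbase.units_smul (fun S => Units.mk0 (d S) (hd0 S))
  convert h2 using 1
  rfl

lemma KD_finrank (hθ : ∀ i j, θ j i = -θ i j) (k : ℕ) :
    Module.finrank ℂ (KD θ k) = (n+1).choose k := by
  rw [KD_eq_span hθ k, finrank_span_eq_card (lin_indep hθ k)]
  rw [Fintype.card_finset_len, Fintype.card_fin]

lemma KD_bot (hθ : ∀ i j, θ j i = -θ i j) (k : ℕ) (hk : n + 1 < k) : KD θ k = ⊥ := by
  rw [KD, Submodule.span_eq_bot]
  rintro x ⟨f, rfl⟩
  have hnd : ¬ (List.ofFn f).Nodup := by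
    intro h
    have hle := h.length_le_card
    rw [List.length_ofFn, Fintype.card_fin] at hle
    omega
  rw [ofFn_prod_eq_Wl]
  exact (Wl_norm hθ _).1 hnd

lemma pairing_zero (hθ : ∀ i j, θ j i = -θ i j) (S T : Finset (Fin (n+1))) (a : Fin (n+1))
    (haS : a ∈ S) (haT : a ∈ T) :
    Wl θ (Finset.sort S (· ≤ ·)) * Wl θ (Finset.sort T (· ≤ ·)) = 0 := by
  rw [← Wl_append]
  apply (Wl_norm hθ _).1
  intro hnd
  rw [List.nodup_append] at hnd
  exact hnd.2.2 _ ((Finset.mem_sort _).2 haS) _ ((Finset.mem_sort _).2 haT) rfl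

lemma pairing_nonzero (hθ : ∀ i j, θ j i = -θ i j) (S T : Finset (Fin (n+1)))
    (hdisj : Disjoint S T) (hunion : S ∪ T = Finset.univ) :
    ∃ d : ℂ, d ≠ 0 ∧
      Phi hθ (Wl θ (Finset.sort S (· ≤ ·)) * Wl θ (Finset.sort T (· ≤ ·))) =
        d • Finsupp.single Finset.univ 1 := by
  rw [← Wl_append]
  have hnd : (Finset.sort S (· ≤ ·) ++ Finset.sort T (· ≤ ·)).Nodup := by
    rw [List.nodup_append]
    refine ⟨Finset.sort_nodup _ _, Finset.sort_nodup _ _, fun a h1 b h2 hab =>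
      Finset.disjoint_left.1 hdisj ((Finset.mem_sort _).1 h1) (by subst hab; exact (Finset.mem_sort _).1 h2)⟩
  obtain ⟨d, hd0, hd⟩ := rep_Wl hθ _ hnd
  refine ⟨d, hd0, ?_⟩
  have htf : (Finset.sort S (· ≤ ·) ++ Finset.sort T (· ≤ ·)).toFinset = Finset.univ := by
    rw [List.toFinset_append, Finset.sort_toFinset, Finset.sort_toFinset, hunion]
  rw [htf] at hd
  exact hd
end Main

section Nondeg
variable {n : ℕ} {θ : Matrix (Fin n) (Fin n) ℂ}

lemma coeff_zero {c d : ℂ} (hd0 : d ≠ 0)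
    (h : (c * d) • (Finsupp.single Finset.univ 1 : KModel n) = 0) : c = 0 := by
  rw [Finsupp.smul_single, smul_eq_mul, mul_one] at h
  rcases Finsupp.single_eq_zero.1 h with h'
  exact (mul_eq_zero.1 h').resolve_right hd0

lemma nondeg_left (hθ : ∀ i j, θ j i = -θ i j) {k m : ℕ} (hkm : k + m = n + 1) :
    ∀ x ∈ KD θ k, (∀ y ∈ KD θ m, x * y = 0) → x = 0 := by
  intro x hx hpair
  rw [KD_eq_span hθ k, Submodule.mem_span_range_iff_exists_fun] at hx
  obtain ⟨c, rfl⟩ := hx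
  have hc : ∀ S, c S = 0 := by
    intro S
    have hTc : (S.1ᶜ).card = m := by
      rw [Finset.card_compl, S.2, Fintype.card_fin]; omega
    have h0 := hpair (Bfam θ m ⟨S.1ᶜ, hTc⟩) (Bfam_mem m ⟨S.1ᶜ, hTc⟩)
    rw [Finset.sum_mul] at h0
    have hvanish : ∀ T' ∈ Finset.univ, T' ≠ S →
        (c T' • Bfam θ k T') * Bfam θ m ⟨S.1ᶜ, hTc⟩ = 0 := by
      intro T' _ hne
      obtain ⟨a, haT', haS⟩ : ∃ a, a ∈ T'.1 ∧ a ∉ S.1 := by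
        by_contra hcon
        push_neg at hcon
        exact hne (Subtype.ext (Finset.eq_of_subset_of_card_le
          (fun a ha => hcon a ha) (by rw [S.2, T'.2])))
      rw [smul_mul_assoc, Bfam, Bfam,
        pairing_zero hθ _ _ a haT' (Finset.mem_compl.2 haS), smul_zero]
    rw [Finset.sum_eq_single_of_mem S (Finset.mem_univ S) hvanish, smul_mul_assoc] at h0
    obtain ⟨d, hd0, hd⟩ := pairing_nonzero hθ S.1 S.1ᶜ disjoint_compl_right
      (Finset.union_compl _)
    have h1 := congrArg (Phi hθ) h0
    rw [map_smul, map_zero, Bfam, Bfam, hd, smul_smul] at h1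
    exact coeff_zero hd0 h1
  exact Finset.sum_eq_zero fun S _ => by rw [hc S, zero_smul]

lemma nondeg_right (hθ : ∀ i j, θ j i = -θ i j) {k m : ℕ} (hkm : k + m = n + 1) :
    ∀ y ∈ KD θ m, (∀ x ∈ KD θ k, x * y = 0) → y = 0 := by
  intro y hy hpair
  rw [KD_eq_span hθ m, Submodule.mem_span_range_iff_exists_fun] at hy
  obtain ⟨c, rfl⟩ := hy
  have hc : ∀ T, c T = 0 := by
    intro T
    have hTc : (T.1ᶜ).card = k := by
      rw [Finset.card_compl, T.2, Fintype.card_fin]; omega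
    have h0 := hpair (Bfam θ k ⟨T.1ᶜ, hTc⟩) (Bfam_mem k ⟨T.1ᶜ, hTc⟩)
    rw [Finset.mul_sum] at h0
    have hvanish : ∀ T' ∈ Finset.univ, T' ≠ T →
        Bfam θ k ⟨T.1ᶜ, hTc⟩ * (c T' • Bfam θ m T') = 0 := by
      intro T' _ hne
      obtain ⟨a, haT', haT⟩ : ∃ a, a ∈ T'.1 ∧ a ∉ T.1 := by
        by_contra hcon
        push_neg at hcon
        exact hne (Subtype.ext (Finset.eq_of_subset_of_card_le
          (fun a ha => hcon a ha) (by rw [T.2, T'.2])))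
      rw [mul_smul_comm, Bfam, Bfam,
        pairing_zero hθ _ _ a (Finset.mem_compl.2 haT) haT', smul_zero]
    rw [Finset.sum_eq_single_of_mem T (Finset.mem_univ T) hvanish, mul_smul_comm] at h0
    obtain ⟨d, hd0, hd⟩ := pairing_nonzero hθ T.1ᶜ T.1 disjoint_compl_left
      (by rw [Finset.union_comm, Finset.union_compl])
    have h1 := congrArg (Phi hθ) h0
    rw [map_smul, map_zero, Bfam, Bfam, hd, smul_smul] at h1
    exact coeff_zero hd0 h1
  exact Finset.sum_eq_zero fun T _ => by rw [hc T, zero_smul]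
end Nondeg


/-- `A^!` is a graded Frobenius algebra of index `n+1`: `A^!_k = 0` for
`k > n+1`, `dim_ℂ A^!_k = C(n+1, k)` for `0 ≤ k ≤ n+1` (in particular `A^!_{n+1} ≅ ℂ`), and
the multiplication `A^!_k ⊗ A^!_{n+1−k} → A^!_{n+1}` is a nondegenerate pairing. -/
theorem koszulDual_frobenius {n : ℕ} (θ : Matrix (Fin n) (Fin n) ℂ)
    (hθ : ∀ i j, θ j i = -θ i j) :
    (∀ k : ℕ, n + 1 < k → KD θ k = ⊥) ∧
    (∀ k : ℕ, k ≤ n + 1 → Module.finrank ℂ (KD θ k) = (n + 1).choose k) ∧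
    (∀ k : ℕ, k ≤ n + 1 →
      (∀ x ∈ KD θ k, (∀ y ∈ KD θ (n + 1 - k), x * y = 0) → x = 0) ∧
      (∀ y ∈ KD θ (n + 1 - k), (∀ x ∈ KD θ k, x * y = 0) → y = 0)) := by
  refine ⟨fun k hk => KD_bot hθ k hk, fun k _ => KD_finrank hθ k, fun k hk =>
    ⟨nondeg_left hθ (by omega), nondeg_right hθ (by omega)⟩⟩
end
end

section
/- Let H = Fun(GL(n)) as above and let π: H → L be the Hopf algebra surjection onto Fun(GL(d)×GL(n−d)) defined by π(g_{ij}) = l_{ij} if (i,j) lies in the diagonal blocks (1 ≤ i,j ≤ d or d+1 ≤ i,j ≤ n) and π(g_{ij}) = 0 otherwise. Define the left coaction Φ = (π ⊗ id)∘Δ : H → L ⊗ H. Then the elements η_{ij} = ∑_{k=1}^d S(g_{ik}) g_{kj} and η^⊥_{ij} = ∑_{k=d+1}^n S(g_{ik}) g_{kj} are left coinvariant: Φ(η_{ij}) = 1 ⊗ η_{ij} and Φ(η^⊥_{ij}) = 1 ⊗ η^⊥_{ij}. -/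
open scoped TensorProduct

lemma eta_coinv_aux {H L : Type*} [CommRing H] [Algebra ℂ H] [CommRing L] [Algebra ℂ L]
    {n : ℕ}
    (g gS : Fin n → Fin n → H) (l lS : Fin n → Fin n → L)
    (Δ : H →ₐ[ℂ] H ⊗[ℂ] H)
    (hΔg : ∀ i j, Δ (g i j) = ∑ k, g i k ⊗ₜ[ℂ] g k j)
    (hΔgS : ∀ i j, Δ (gS i j) = ∑ p, gS p j ⊗ₜ[ℂ] gS i p)
    (π : H →ₐ[ℂ] L)
    (P : Fin n → Prop) [DecidablePred P]
    (hπg' : ∀ k m, P k → π (g k m) = if P m then l k m else 0)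
    (hπgS' : ∀ p k, P k → π (gS p k) = if P p then lS p k else 0)
    (hL : ∀ p m, P p → P m →
      ∑ k ∈ Finset.univ.filter P, lS p k * l k m = if p = m then 1 else 0)
    (i j : Fin n) :
    ((Algebra.TensorProduct.map π (AlgHom.id ℂ H)).comp Δ)
        (∑ k ∈ Finset.univ.filter P, gS i k * g k j)
      = 1 ⊗ₜ[ℂ] (∑ k ∈ Finset.univ.filter P, gS i k * g k j) := by
  rw [AlgHom.comp_apply, map_sum, map_sum]
  have step : ∀ k ∈ Finset.univ.filter P,
      (Algebra.TensorProduct.map π (AlgHom.id ℂ H)) (Δ (gS i k * g k j)) =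
      ∑ p, ∑ m, (π (gS p k) * π (g k m)) ⊗ₜ[ℂ] (gS i p * g m j) := by
    intro k hk
    rw [map_mul, hΔg, hΔgS, map_mul, map_sum, map_sum, Finset.sum_mul_sum]
    simp [Algebra.TensorProduct.tmul_mul_tmul]
  rw [Finset.sum_congr rfl step, Finset.sum_comm]
  have swap2 : ∀ p : Fin n,
      ∑ k ∈ Finset.univ.filter P, ∑ m, (π (gS p k) * π (g k m)) ⊗ₜ[ℂ] (gS i p * g m j)
      = ∑ m, (∑ k ∈ Finset.univ.filter P, π (gS p k) * π (g k m)) ⊗ₜ[ℂ] (gS i p * g m j) := by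
    intro p
    rw [Finset.sum_comm]
    exact Finset.sum_congr rfl fun m _ => (TensorProduct.sum_tmul _ _ _).symm
  rw [Finset.sum_congr rfl fun p _ => swap2 p]
  have scal : ∀ p m : Fin n,
      (∑ k ∈ Finset.univ.filter P, π (gS p k) * π (g k m)) =
      if p = m ∧ P p then 1 else 0 := by
    intro p m
    have hterm : ∀ k ∈ Finset.univ.filter P, π (gS p k) * π (g k m) =
        if P p ∧ P m then lS p k * l k m else 0 := by
      intro k hk
      have hPk := (Finset.mem_filter.mp hk).2
      rw [hπg' _ _ hPk, hπgS' _ _ hPk]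
      by_cases h1 : P p <;> by_cases h2 : P m <;> simp [h1, h2]
    rw [Finset.sum_congr rfl hterm]
    by_cases h1 : P p
    · by_cases h2 : P m
      · simp only [h1, h2, and_self, if_true]
        rw [hL p m h1 h2]
        simp [h1]
      · simp only [h2, and_false, if_false, Finset.sum_const_zero]
        rw [if_neg]
        rintro ⟨rfl, hp⟩
        exact h2 hp
    · simp only [h1, false_and, and_false, if_false, Finset.sum_const_zero]
  rw [Finset.sum_congr rfl fun p _ => Finset.sum_congr rfl fun m _ => by rw [scal p m]]
  simp only [TensorProduct.ite_tmul, ite_and]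
  rw [Finset.sum_congr rfl (fun p _ => Finset.sum_ite_eq Finset.univ p _)]
  simp only [Finset.mem_univ, if_true]
  rw [← Finset.sum_filter, TensorProduct.tmul_sum]

/-- let `H = Fun(GL(n))` with generators `g_{ij}` and antipode values
`gS_{ij} = S(g_{ij})`, and let `π : H → L = Fun(GL(d)×GL(n−d))` be the block projection
(`π(g_{ij}) = l_{ij}` on the diagonal blocks and `0` otherwise).  With the left coaction
`Φ = (π ⊗ id) ∘ Δ`, the elements `η_{ij} = ∑_{k=1}^d S(g_{ik}) g_{kj}` and
`η^⊥_{ij} = ∑_{k=d+1}^n S(g_{ik}) g_{kj}` are left coinvariant: `Φ(η_{ij}) = 1 ⊗ η_{ij}` and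
`Φ(η^⊥_{ij}) = 1 ⊗ η^⊥_{ij}`. -/
theorem eta_coinvariant {H L : Type*} [CommRing H] [Algebra ℂ H] [CommRing L] [Algebra ℂ L]
    {n : ℕ} (d : ℕ) (hd : d ≤ n)
    (g gS : Fin n → Fin n → H) (l lS : Fin n → Fin n → L)
    (Δ : H →ₐ[ℂ] H ⊗[ℂ] H)
    (hΔg : ∀ i j, Δ (g i j) = ∑ k, g i k ⊗ₜ[ℂ] g k j)
    (hΔgS : ∀ i j, Δ (gS i j) = ∑ p, gS p j ⊗ₜ[ℂ] gS i p)
    (π : H →ₐ[ℂ] L)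
    (hπg : ∀ i j, π (g i j) =
      if ((i : ℕ) < d ∧ (j : ℕ) < d) ∨ (d ≤ (i : ℕ) ∧ d ≤ (j : ℕ)) then l i j else 0)
    (hπgS : ∀ i j, π (gS i j) =
      if ((i : ℕ) < d ∧ (j : ℕ) < d) ∨ (d ≤ (i : ℕ) ∧ d ≤ (j : ℕ)) then lS i j else 0)
    -- the antipode axiom in the two diagonal blocks of L
    (hL1 : ∀ p m : Fin n, (p : ℕ) < d → (m : ℕ) < d →
      ∑ k ∈ Finset.univ.filter (fun k : Fin n => (k : ℕ) < d), lS p k * l k m =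
        if p = m then 1 else 0)
    (hL2 : ∀ p m : Fin n, d ≤ (p : ℕ) → d ≤ (m : ℕ) →
      ∑ k ∈ Finset.univ.filter (fun k : Fin n => d ≤ (k : ℕ)), lS p k * l k m =
        if p = m then 1 else 0) :
    ∀ i j : Fin n,
      ((Algebra.TensorProduct.map π (AlgHom.id ℂ H)).comp Δ)
          (∑ k ∈ Finset.univ.filter (fun k : Fin n => (k : ℕ) < d), gS i k * g k j)
        = 1 ⊗ₜ[ℂ] (∑ k ∈ Finset.univ.filter (fun k : Fin n => (k : ℕ) < d), gS i k * g k j) ∧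
      ((Algebra.TensorProduct.map π (AlgHom.id ℂ H)).comp Δ)
          (∑ k ∈ Finset.univ.filter (fun k : Fin n => d ≤ (k : ℕ)), gS i k * g k j)
        = 1 ⊗ₜ[ℂ] (∑ k ∈ Finset.univ.filter (fun k : Fin n => d ≤ (k : ℕ)), gS i k * g k j) := by
  intro i j
  refine ⟨eta_coinv_aux g gS l lS Δ hΔg hΔgS π (fun k => (k : ℕ) < d) ?_ ?_ hL1 i j,
          eta_coinv_aux g gS l lS Δ hΔg hΔgS π (fun k => d ≤ (k : ℕ)) ?_ ?_ hL2 i j⟩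
  · intro k m hk; rw [hπg]; split_ifs <;> first | rfl | omega
  · intro p k hk; rw [hπgS]; split_ifs <;> first | rfl | omega
  · intro k m hk; rw [hπg]; split_ifs <;> first | rfl | omega
  · intro p k hk; rw [hπgS]; split_ifs <;> first | rfl | omega
end

section
/- Classical Plücker relations via Laplace expansion: let g = (g_{ij}) be a d×n matrix over a commutative ring, and for a column multi-index K of size d let Λ^K denote the corresponding d×d minor. Then for every multi-index I = (i₁,…,i_{d+1}) of size d+1 and every multi-index J of size d−1, one has ∑_{α=1}^{d+1} (−1)^{α+1} Λ^{I∖{i_α}} Λ^{(i_α)∪J} = 0, where (i_α)∪J denotes the d-index obtained by prepending i_α to J. -/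
/-- The `d×d` minor of the `d×n` matrix `g` on the columns selected by `K`. -/
def colMinor {R : Type*} [CommRing R] {d n : ℕ}
    (g : Fin d → Fin n → R) (K : Fin d → Fin n) : R :=
  (Matrix.of fun r c => g r (K c)).det

/-- classical Plücker relations via Laplace expansion.  For a `d×n` matrix `g`
over a commutative ring (here `d = e+1`), for every column multi-index `I` of size `d+1` and
every column multi-index `J` of size `d−1`:
`∑_{α=1}^{d+1} (−1)^{α+1} Λ^{I∖{i_α}} Λ^{(i_α)∪J} = 0`. -/
theorem plucker_relations {R : Type*} [CommRing R] {e n : ℕ}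
    (g : Fin (e + 1) → Fin n → R)
    (I : Fin (e + 2) → Fin n) (J : Fin e → Fin n) :
    ∑ α : Fin (e + 2), (-1 : R) ^ (α : ℕ) *
        colMinor g (I ∘ α.succAbove) * colMinor g (Fin.cons (I α) J) = 0 := by
  classical
  -- the fixed minor on columns J after deleting row r
  set C : Fin (e + 1) → R := fun r =>
    (Matrix.of fun (s : Fin e) (c : Fin e) => g (r.succAbove s) (J c)).det with hC
  -- Step 1: expand Λ^{(i_α) ∪ J} along its first column
  have expand : ∀ α : Fin (e + 2), colMinor g (Fin.cons (I α) J)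
      = ∑ r : Fin (e + 1), (-1 : R) ^ (r : ℕ) * g r (I α) * C r := by
    intro α
    unfold colMinor
    rw [Matrix.det_succ_column_zero]
    refine Finset.sum_congr rfl fun r _ => ?_
    simp [hC, Matrix.submatrix]
  -- Step 2: key vanishing, from a determinant with a repeated column
  have key : ∀ r : Fin (e + 1),
      ∑ α : Fin (e + 2), (-1 : R) ^ (α : ℕ) * colMinor g (I ∘ α.succAbove) * g r (I α) = 0 := by
    intro r
    set N : Matrix (Fin (e + 2)) (Fin (e + 2)) R :=
      Matrix.of fun α j => g (Fin.cons (α := fun _ => Fin (e + 1)) r (fun k => k) j) (I α) with hN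
    have hzero : N.det = 0 := by
      refine Matrix.det_zero_of_column_eq (i := 0) (j := r.succ) ?_ fun k => ?_
      · exact (Fin.succ_ne_zero r).symm
      · simp [hN]
    rw [Matrix.det_succ_column_zero] at hzero
    rw [← hzero]
    refine Finset.sum_congr rfl fun α _ => ?_
    have hsub : (N.submatrix α.succAbove Fin.succ).det = colMinor g (I ∘ α.succAbove) := by
      rw [← Matrix.det_transpose]
      unfold colMinor
      congr 1
    rw [hsub]
    simp [hN]
    ring
  -- Step 3: combine
  calc ∑ α : Fin (e + 2), (-1 : R) ^ (α : ℕ) *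
        colMinor g (I ∘ α.succAbove) * colMinor g (Fin.cons (I α) J)
      = ∑ α : Fin (e + 2), ∑ r : Fin (e + 1),
          (-1 : R) ^ (α : ℕ) * colMinor g (I ∘ α.succAbove)
            * ((-1 : R) ^ (r : ℕ) * g r (I α) * C r) := by
        refine Finset.sum_congr rfl fun α _ => ?_
        rw [expand α, Finset.mul_sum]
    _ = ∑ r : Fin (e + 1), ((-1 : R) ^ (r : ℕ) * C r) *
          ∑ α : Fin (e + 2), (-1 : R) ^ (α : ℕ) * colMinor g (I ∘ α.succAbove) * g r (I α) := by
        rw [Finset.sum_comm]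
        refine Finset.sum_congr rfl fun r _ => ?_
        rw [Finset.mul_sum]
        refine Finset.sum_congr rfl fun α _ => ?_
        ring
    _ = 0 := by
        refine Finset.sum_eq_zero fun r _ => ?_
        rw [key r, mul_zero]
end
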